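/- Let 0 < q < 1, γ ≥ 0, and M ≥ 1 an integer. Let (τ_{j,r}) for j ∈ {1,…,M}, r ≥ 1 be i.i.d. random variables with the exponential distribution of rate 1, and let N take values in {1, 2, 3, …} with P(N = m) = q^{m−1}(1−q), independent of the τ's. Set W_r = Σ_{j=1}^{M} max(γ, τ_{j,r}) and α = Σ_{r=1}^{N} W_r. Then (E[α²]/2)/E[α] = [γ²/2 + (γ+1)e^{−γ}]/(γ + e^{−γ}) + ((M−1)/2 + Mq/(1−q))·(γ + e^{−γ}). -/

import Mathlib

open MeasureTheory ProbabilityTheory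
open scoped NNReal ENNReal

section AuxAoI
open Real Set

lemma expDensity (g : ℝ → ℝ) (hg : Measurable g)
    (hint : IntegrableOn (fun x => Real.exp (-x) * g x) (Set.Ioi 0)) :
    Integrable g (expMeasure 1) ∧
      ∫ x, g x ∂(expMeasure 1) = ∫ x in Set.Ioi 0, Real.exp (-x) * g x := by
  have hpdf : expMeasure 1 = volume.withDensity
      (fun x => ((Real.toNNReal (if 0 ≤ x then Real.exp (-x) else 0) : ℝ≥0) : ℝ≥0∞)) := by
    show gammaMeasure 1 1 = _
    unfold gammaMeasure
    congr 1
    funext x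
    rw [show gammaPDF 1 1 x = exponentialPDF 1 x from rfl, exponentialPDF_eq]
    simp only [one_mul, ENNReal.ofReal]
  have hd : Measurable fun x => Real.toNNReal (if 0 ≤ x then Real.exp (-x) else 0) :=
    (Measurable.ite measurableSet_Ici ((measurable_id.neg).exp) measurable_const).real_toNNReal
  have hsmul : (fun x => (Real.toNNReal (if 0 ≤ x then Real.exp (-x) else 0) : ℝ≥0) • g x)
      = Set.indicator (Set.Ici 0) (fun x => Real.exp (-x) * g x) := by
    funext x
    by_cases hx : (0:ℝ) ≤ x
    · simp [hx, Set.indicator_of_mem (mem_Ici.2 hx), NNReal.smul_def,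
        Real.coe_toNNReal _ (Real.exp_nonneg _)]
    · simp [hx, Set.indicator_of_notMem (fun h => hx (mem_Ici.1 h))]
  have hIci : IntegrableOn (fun x => Real.exp (-x) * g x) (Set.Ici 0) := by
    rwa [integrableOn_Ici_iff_integrableOn_Ioi]
  constructor
  · rw [hpdf]
    exact (integrable_withDensity_iff_integrable_smul (g := g) hd).mpr
      (by rw [hsmul]; exact hIci.integrable_indicator measurableSet_Ici)
  · rw [hpdf, integral_withDensity_eq_integral_smul hd, hsmul, integral_indicator measurableSet_Ici,
      MeasureTheory.integral_Ici_eq_integral_Ioi]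


lemma deriv1 (x : ℝ) : HasDerivAt (fun y => -((y+1) * Real.exp (-y))) (Real.exp (-x) * x) x := by
  have he : HasDerivAt (fun y : ℝ => Real.exp (-y)) (Real.exp (-x) * (-1)) x :=
    ((hasDerivAt_id x).neg).exp
  have h := (((hasDerivAt_id x).add_const 1).mul he).neg
  refine h.congr_deriv ?_
  simp [id]
  ring

lemma deriv2 (x : ℝ) : HasDerivAt (fun y => -((y^2+2*y+2) * Real.exp (-y)))
    (Real.exp (-x) * x^2) x := by
  have he : HasDerivAt (fun y : ℝ => Real.exp (-y)) (Real.exp (-x) * (-1)) x :=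
    ((hasDerivAt_id x).neg).exp
  have hp : HasDerivAt (fun y : ℝ => y^2+2*y+2) (2*x+2) x := by
    have := (((hasDerivAt_pow 2 x).add ((hasDerivAt_id x).const_mul 2)).add_const 2)
    refine this.congr_deriv ?_; norm_num
  have h := (hp.mul he).neg
  refine h.congr_deriv ?_
  simp [id]
  ring

lemma tendsto1 : Filter.Tendsto (fun y => -((y+1) * Real.exp (-y))) Filter.atTop (nhds 0) := by
  have h := ((tendsto_pow_mul_exp_neg_atTop_nhds_zero 1).add
    (tendsto_pow_mul_exp_neg_atTop_nhds_zero 0)).neg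
  simp only [add_zero, neg_zero] at h
  exact h.congr (fun x => by ring)

lemma tendsto2 : Filter.Tendsto (fun y => -((y^2+2*y+2) * Real.exp (-y))) Filter.atTop (nhds 0) := by
  have h := (((tendsto_pow_mul_exp_neg_atTop_nhds_zero 2).add
    ((tendsto_pow_mul_exp_neg_atTop_nhds_zero 1).const_mul 2)).add
    ((tendsto_pow_mul_exp_neg_atTop_nhds_zero 0).const_mul 2)).neg
  simp only [add_zero, neg_zero, mul_zero] at h
  exact h.congr (fun x => by ring)

lemma Ioc_exp (γ : ℝ) (hγ : 0 ≤ γ) :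
    ∫ x in Set.Ioc 0 γ, Real.exp (-x) = 1 - Real.exp (-γ) := by
  rw [← intervalIntegral.integral_of_le hγ]
  rw [intervalIntegral.integral_comp_neg (fun x => Real.exp x)]
  rw [integral_exp]
  simp

lemma momC (γ c : ℝ) (hγ : 0 ≤ γ) :
    ∫ x in Set.Ioc 0 γ, Real.exp (-x) * c = (1 - Real.exp (-γ)) * c := by
  rw [integral_mul_const, Ioc_exp γ hγ]

lemma I2a (γ : ℝ) (hγ : 0 ≤ γ) :
    IntegrableOn (fun x => Real.exp (-x) * x) (Set.Ioi γ) ∧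
    ∫ x in Set.Ioi γ, Real.exp (-x) * x = (γ + 1) * Real.exp (-γ) := by
  have hd : ∀ x ∈ Set.Ici γ, HasDerivAt (fun y => -((y+1) * Real.exp (-y)))
      (Real.exp (-x) * x) x := fun x _ => deriv1 x
  have hpos : ∀ x ∈ Set.Ioi γ, 0 ≤ Real.exp (-x) * x := fun x hx =>
    mul_nonneg (Real.exp_nonneg _) (le_of_lt (lt_of_le_of_lt hγ hx))
  refine ⟨integrableOn_Ioi_deriv_of_nonneg' hd hpos tendsto1, ?_⟩
  rw [integral_Ioi_of_hasDerivAt_of_nonneg' hd hpos tendsto1]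
  ring

lemma I2b (γ : ℝ) (hγ : 0 ≤ γ) :
    IntegrableOn (fun x => Real.exp (-x) * x^2) (Set.Ioi γ) ∧
    ∫ x in Set.Ioi γ, Real.exp (-x) * x^2 = (γ^2 + 2*γ + 2) * Real.exp (-γ) := by
  have hd : ∀ x ∈ Set.Ici γ, HasDerivAt (fun y => -((y^2+2*y+2) * Real.exp (-y)))
      (Real.exp (-x) * x^2) x := fun x _ => deriv2 x
  have hpos : ∀ x ∈ Set.Ioi γ, 0 ≤ Real.exp (-x) * x^2 := fun x _ =>
    mul_nonneg (Real.exp_nonneg _) (sq_nonneg _)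
  refine ⟨integrableOn_Ioi_deriv_of_nonneg' hd hpos tendsto2, ?_⟩
  rw [integral_Ioi_of_hasDerivAt_of_nonneg' hd hpos tendsto2]
  ring

lemma splitInt (γ : ℝ) (hγ : 0 ≤ γ) (g : ℝ → ℝ) (hgc : Continuous g)
    (hIoc : Set.EqOn (fun x => Real.exp (-x) * g x) (fun x => Real.exp (-x) * g γ) (Set.Ioc 0 γ))
    (h2 : IntegrableOn (fun x => Real.exp (-x) * g x) (Set.Ioi γ)) :
    IntegrableOn (fun x => Real.exp (-x) * g x) (Set.Ioi 0) ∧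
    ∫ x in Set.Ioi 0, Real.exp (-x) * g x
      = (1 - Real.exp (-γ)) * g γ + ∫ x in Set.Ioi γ, Real.exp (-x) * g x := by
  have hu : Set.Ioc 0 γ ∪ Set.Ioi γ = Set.Ioi 0 := Set.Ioc_union_Ioi_eq_Ioi hγ
  have hc : Continuous fun x => Real.exp (-x) * g x :=
    (Real.continuous_exp.comp continuous_neg).mul hgc
  have h1 : IntegrableOn (fun x => Real.exp (-x) * g x) (Set.Ioc 0 γ) :=
    hc.integrableOn_Ioc
  have hdisj : Disjoint (Set.Ioc 0 γ) (Set.Ioi γ) := Set.Ioc_disjoint_Ioi le_rfl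
  constructor
  · rw [← hu]; exact h1.union h2
  · rw [← hu, setIntegral_union hdisj measurableSet_Ioi h1 h2,
      setIntegral_congr_fun measurableSet_Ioc hIoc, momC γ (g γ) hγ]

lemma mom1 (γ : ℝ) (hγ : 0 ≤ γ) :
    Integrable (fun x => max γ x) (expMeasure 1) ∧
      ∫ x, max γ x ∂(expMeasure 1) = γ + Real.exp (-γ) := by
  have h2 := I2a γ hγ
  have h2' : IntegrableOn (fun x => Real.exp (-x) * max γ x) (Set.Ioi γ) := by
    refine h2.1.congr ?_
    refine (ae_restrict_iff' measurableSet_Ioi).2 (Filter.Eventually.of_forall fun x hx => ?_)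
    show Real.exp (-x) * x = Real.exp (-x) * max γ x
    rw [max_eq_right (le_of_lt hx)]
  have hsplit := splitInt γ hγ (fun x => max γ x) (continuous_const.max continuous_id)
    (fun x hx => show Real.exp (-x) * max γ x = Real.exp (-x) * max γ γ by
      rw [max_eq_left hx.2, max_self]) h2'
  have hval : ∫ x in Set.Ioi γ, Real.exp (-x) * max γ x
      = (γ + 1) * Real.exp (-γ) := by
    rw [setIntegral_congr_fun measurableSet_Ioi
      (fun x hx => show Real.exp (-x) * max γ x = Real.exp (-x) * x by
        rw [max_eq_right (le_of_lt hx)]), h2.2]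
  have hD := expDensity (fun x => max γ x) (measurable_const.max measurable_id) hsplit.1
  refine ⟨hD.1, ?_⟩
  rw [hD.2, hsplit.2, hval]
  simp only [max_self]
  ring

lemma mom2 (γ : ℝ) (hγ : 0 ≤ γ) :
    Integrable (fun x => (max γ x)^2) (expMeasure 1) ∧
      ∫ x, (max γ x)^2 ∂(expMeasure 1) = γ^2 + 2*(γ+1)*Real.exp (-γ) := by
  have h2 := I2b γ hγ
  have h2' : IntegrableOn (fun x => Real.exp (-x) * (max γ x)^2) (Set.Ioi γ) := by
    refine h2.1.congr ?_
    refine (ae_restrict_iff' measurableSet_Ioi).2 (Filter.Eventually.of_forall fun x hx => ?_)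
    show Real.exp (-x) * x^2 = Real.exp (-x) * (max γ x)^2
    rw [max_eq_right (le_of_lt hx)]
  have hsplit := splitInt γ hγ (fun x => (max γ x)^2)
    ((continuous_const.max continuous_id).pow 2)
    (fun x hx => show Real.exp (-x) * (max γ x)^2 = Real.exp (-x) * (max γ γ)^2 by
      rw [max_eq_left hx.2, max_self]) h2'
  have hval : ∫ x in Set.Ioi γ, Real.exp (-x) * (max γ x)^2
      = (γ^2 + 2*γ + 2) * Real.exp (-γ) := by
    rw [setIntegral_congr_fun measurableSet_Ioi
      (fun x hx => show Real.exp (-x) * (max γ x)^2 = Real.exp (-x) * x^2 by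
        rw [max_eq_right (le_of_lt hx)]), h2.2]
  have hD := expDensity (fun x => (max γ x)^2)
    ((measurable_const.max measurable_id).pow_const 2) hsplit.1
  refine ⟨hD.1, ?_⟩
  rw [hD.2, hsplit.2, hval]
  simp only [max_self]
  ring


lemma geomG1 {q : ℝ} (h0 : 0 < q) (h1 : q < 1) :
    HasSum (fun n : ℕ => ((n:ℝ)+1) * q^n) (1/(1-q)^2) := by
  have hq : ‖q‖ < 1 := by rw [Real.norm_eq_abs, abs_lt]; constructor <;> linarith
  have h := hasSum_choose_mul_geometric_of_norm_lt_one 1 hq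
  refine h.congr_fun fun n => ?_
  rw [Nat.choose_one_right]
  push_cast; ring

lemma geomG2 {q : ℝ} (h0 : 0 < q) (h1 : q < 1) :
    HasSum (fun n : ℕ => ((n:ℝ)+1)^2 * q^n) (2/(1-q)^3 - 1/(1-q)^2) := by
  have hq : ‖q‖ < 1 := by rw [Real.norm_eq_abs, abs_lt]; constructor <;> linarith
  have h := (hasSum_choose_mul_geometric_of_norm_lt_one 2 hq).mul_left 2
  have h' : HasSum (fun n : ℕ => (((n:ℝ)+1)*((n:ℝ)+2)) * q^n) (2 * (1/(1-q)^3)) := by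
    refine h.congr_fun fun n => ?_
    have : ((n+2).choose 2 : ℝ) = ((n:ℝ)+2) * (((n:ℝ)+2)-1) / 2 := by
      rw [show ((n:ℝ)+2) = ((n+2 : ℕ) : ℝ) by push_cast; ring, ← Nat.cast_choose_two]
    rw [this]; ring
  have h2 := h'.sub (geomG1 h0 h1)
  have heq : (fun n : ℕ => ((n:ℝ)+1)^2 * q^n)
      = fun n : ℕ => ((n:ℝ)+1)*((n:ℝ)+2) * q^n - ((n:ℝ)+1) * q^n := by
    funext n; ring
  rw [heq]
  rw [show (2:ℝ)/(1-q)^3 = 2*(1/(1-q)^3) by ring]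
  exact h2


lemma seriesMain {q : ℝ} (h0 : 0 < q) (h1 : q < 1)
    (hG1 : HasSum (fun n : ℕ => ((n:ℝ)+1) * q^n) (1/(1-q)^2))
    (hG2 : HasSum (fun n : ℕ => ((n:ℝ)+1)^2 * q^n) (2/(1-q)^3 - 1/(1-q)^2))
    (A B : ℝ) :
    HasSum (fun n : ℕ => q^n * (1-q) * (A*((n:ℝ)+1) + B*((n:ℝ)+1)^2))
      (A/(1-q) + B*(2/(1-q)^2 - 1/(1-q))) := by
  have hne : (1:ℝ) - q ≠ 0 := by linarith
  have h := (hG1.mul_left (A*(1-q))).add (hG2.mul_left (B*(1-q)))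
  have heq : (fun n : ℕ => q^n * (1-q) * (A*((n:ℝ)+1) + B*((n:ℝ)+1)^2))
      = fun n : ℕ => A*(1-q) * (((n:ℝ)+1) * q^n) + B*(1-q) * (((n:ℝ)+1)^2 * q^n) := by
    funext n; ring
  rw [heq]
  rw [show A/(1-q) + B*(2/(1-q)^2 - 1/(1-q))
      = A*(1-q)*(1/(1-q)^2) + B*(1-q)*(2/(1-q)^3 - 1/(1-q)^2) by field_simp]
  exact h

end AuxAoI

set_option maxHeartbeats 1000000 in
/-- Round-robin AoI (Theorem 5): with `(τ_{j,r})`, `j ∈ {1,…,M}`, `r ≥ 1`, i.i.d. exponential of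
rate 1, `N` geometric on `{1,2,…}` with `P(N = m) = q^{m−1}(1−q)` independent of the `τ`'s,
`W_r = Σ_{j=1}^M max(γ, τ_{j,r})` and `α = Σ_{r=1}^N W_r`, we have
`(E[α²]/2)/E[α] = [γ²/2 + (γ+1)e^{−γ}]/(γ + e^{−γ}) + ((M−1)/2 + Mq/(1−q))·(γ + e^{−γ})`. -/
theorem stmt15 {Ω : Type*} {mΩ : MeasurableSpace Ω} (μ : Measure Ω) [IsProbabilityMeasure μ]
    (q γ : ℝ) (hq0 : 0 < q) (hq1 : q < 1) (hγ : 0 ≤ γ)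
    (M : ℕ) (hM : 1 ≤ M)
    (τ : Fin M × ℕ → Ω → ℝ) (hmeas : ∀ p, Measurable (τ p))
    (hdist : ∀ p, μ.map (τ p) = expMeasure 1)
    (hindep : iIndepFun (m := fun _ => Real.measurableSpace) τ μ)
    (N : Ω → ℕ) (hNmeas : Measurable N)
    (hN : ∀ m : ℕ, 1 ≤ m → μ {ω | N ω = m} = ENNReal.ofReal (q ^ (m - 1) * (1 - q)))
    (hNindep : IndepFun N (fun ω => fun p => τ p ω) μ) :
    ((∫ ω, (∑ r ∈ Finset.range (N ω), ∑ j : Fin M, max γ (τ (j, r) ω)) ^ 2 ∂μ) / 2)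
        / (∫ ω, ∑ r ∈ Finset.range (N ω), ∑ j : Fin M, max γ (τ (j, r) ω) ∂μ)
      = (γ ^ 2 / 2 + (γ + 1) * Real.exp (-γ)) / (γ + Real.exp (-γ))
        + (((M : ℝ) - 1) / 2 + (M : ℝ) * q / (1 - q)) * (γ + Real.exp (-γ)) := by
  classical
  set a : ℝ := γ + Real.exp (-γ) with ha
  set b : ℝ := γ^2 + 2*(γ+1)*Real.exp (-γ) with hb
  have hexp0 : (0:ℝ) < Real.exp (-γ) := Real.exp_pos _
  have hapos : 0 < a := by rw [ha]; linarith
  have hqne : (1:ℝ) - q ≠ 0 := by linarith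
  have hMpos : (0:ℝ) < (M:ℝ) := by exact_mod_cast hM
  -- the max variables
  set X : Fin M × ℕ → Ω → ℝ := fun p ω => max γ (τ p ω) with hXdef
  have hXmeas : ∀ p, Measurable (X p) := fun p => measurable_const.max (hmeas p)
  have hXnn : ∀ p ω, 0 ≤ X p ω := fun p ω => le_trans hγ (le_max_left _ _)
  have hXint : ∀ p, Integrable (X p) μ := by
    intro p
    have h := (mom1 γ hγ).1
    rw [← hdist p] at h
    exact (integrable_map_measure h.1 (hmeas p).aemeasurable).mp h
  have hX1 : ∀ p, ∫ ω, X p ω ∂μ = a := by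
    intro p
    have : ∫ ω, X p ω ∂μ = ∫ x, max γ x ∂(μ.map (τ p)) :=
      (integral_map (hmeas p).aemeasurable
        (measurable_const.max measurable_id).aestronglyMeasurable).symm
    rw [this, hdist p, (mom1 γ hγ).2]
  have hXXint : ∀ p, Integrable (X p * X p) μ := by
    intro p
    have h := (mom2 γ hγ).1
    rw [← hdist p] at h
    have h2 := (integrable_map_measure h.1 (hmeas p).aemeasurable).mp h
    refine h2.congr (Filter.Eventually.of_forall fun ω => ?_)
    simp [hXdef, pow_two]
  have hXX : ∀ p, ∫ ω, (X p * X p) ω ∂μ = b := by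
    intro p
    have h1 : ∫ ω, (X p * X p) ω ∂μ = ∫ ω, (max γ (τ p ω))^2 ∂μ := by
      refine integral_congr_ae (Filter.Eventually.of_forall fun ω => ?_)
      simp [hXdef, pow_two]
    have h2 : ∫ ω, (max γ (τ p ω))^2 ∂μ = ∫ x, (max γ x)^2 ∂(μ.map (τ p)) :=
      (integral_map (hmeas p).aemeasurable
        ((measurable_const.max measurable_id).pow_const 2).aestronglyMeasurable).symm
    rw [h1, h2, hdist p, (mom2 γ hγ).2, hb]
  -- independence of the X's
  have hindepX : iIndepFun (m := fun _ => Real.measurableSpace) X μ :=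
    hindep.comp (fun _ => fun x => max γ x) (fun _ => measurable_const.max measurable_id)
  have hpair : ∀ p p', p ≠ p' → IndepFun (X p) (X p') μ := fun p p' h =>
    hindepX.indepFun h
  have hcrossint : ∀ p p', p ≠ p' → Integrable (X p * X p') μ := fun p p' h =>
    (hpair p p' h).integrable_mul (hXint p) (hXint p')
  have hcross : ∀ p p', p ≠ p' → ∫ ω, (X p * X p') ω ∂μ = a * a := by
    intro p p' h
    rw [(hpair p p' h).integral_mul_eq_mul_integral (hXint p).1 (hXint p').1, hX1 p, hX1 p']
  -- partial sums
  set s : ℕ → Finset (Fin M × ℕ) := fun m => Finset.univ ×ˢ Finset.range m with hs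
  have hcard : ∀ m, (s m).card = M * m := by
    intro m
    rw [hs]
    simp [Finset.card_product]
  set S : ℕ → Ω → ℝ := fun m ω => ∑ p ∈ s m, X p ω with hS
  have hSmeas : ∀ m, Measurable (S m) := fun m =>
    Finset.measurable_sum _ (fun p _ => hXmeas p)
  have hSnn : ∀ m ω, 0 ≤ S m ω := fun m ω => Finset.sum_nonneg fun p _ => hXnn p ω
  have hSint : ∀ m, Integrable (S m) μ := fun m =>
    integrable_finset_sum _ (fun p _ => hXint p)
  have hSval : ∀ m, ∫ ω, S m ω ∂μ = (M:ℝ) * m * a := by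
    intro m
    rw [hS]
    simp only
    rw [integral_finset_sum _ (fun p _ => hXint p)]
    rw [Finset.sum_congr rfl (fun p _ => hX1 p), Finset.sum_const, hcard m, nsmul_eq_mul]
    push_cast; ring
  have hS2int : ∀ m, Integrable (fun ω => (S m ω)^2) μ := by
    intro m
    have : (fun ω => (S m ω)^2) = fun ω => ∑ p ∈ s m, ∑ p' ∈ s m, (X p * X p') ω := by
      funext ω
      simp only [pow_two, hS, Finset.sum_mul_sum, Pi.mul_apply]
    rw [this]
    exact integrable_finset_sum _ (fun p _ => integrable_finset_sum _ (fun p' _ => by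
      by_cases h : p = p'
      · subst h; exact hXXint p
      · exact hcrossint p p' h))
  have hS2val : ∀ m, ∫ ω, (S m ω)^2 ∂μ
      = ((M:ℝ)*m) * b + (((M:ℝ)*m)^2 - (M:ℝ)*m) * a^2 := by
    intro m
    have h1 : (fun ω => (S m ω)^2) = fun ω => ∑ p ∈ s m, ∑ p' ∈ s m, (X p * X p') ω := by
      funext ω
      simp only [pow_two, hS, Finset.sum_mul_sum, Pi.mul_apply]
    rw [h1, integral_finset_sum _ (fun p _ => integrable_finset_sum _ (fun p' _ => by
      by_cases h : p = p'
      · subst h; exact hXXint p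
      · exact hcrossint p p' h))]
    have h2 : ∀ p ∈ s m, ∫ ω, ∑ p' ∈ s m, (X p * X p') ω ∂μ
        = ∑ p' ∈ s m, ∫ ω, (X p * X p') ω ∂μ := fun p _ =>
      integral_finset_sum _ (fun p' _ => by
        by_cases h : p = p'
        · subst h; exact hXXint p
        · exact hcrossint p p' h)
    rw [Finset.sum_congr rfl h2]
    have h3 : ∀ p ∈ s m, ∑ p' ∈ s m, ∫ ω, (X p * X p') ω ∂μ
        = ∑ p' ∈ s m, (a^2 + if p = p' then b - a^2 else 0) := by
      intro p hp
      refine Finset.sum_congr rfl fun p' _ => ?_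
      by_cases h : p = p'
      · subst h; rw [hXX p]; simp
      · rw [hcross p p' h]; simp [h, pow_two]
    rw [Finset.sum_congr rfl h3]
    have h4 : ∀ p ∈ s m, ∑ p' ∈ s m, (a^2 + if p = p' then b - a^2 else 0)
        = (s m).card * a^2 + (b - a^2) := by
      intro p hp
      rw [Finset.sum_add_distrib, Finset.sum_const, Finset.sum_ite_eq (s m) p, if_pos hp]
      simp [mul_comm]
    rw [Finset.sum_congr rfl h4, Finset.sum_const, hcard m, nsmul_eq_mul]
    push_cast; ring
  -- the random variable F
  set T : Ω → (Fin M × ℕ → ℝ) := fun ω p => τ p ω with hT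
  have hTmeas : Measurable T := measurable_pi_lambda _ (fun p => hmeas p)
  set φ : ℕ → (Fin M × ℕ → ℝ) → ℝ := fun m v => ∑ p ∈ s m, max γ (v p) with hφ
  have hφmeas : ∀ m, Measurable (φ m) := fun m =>
    Finset.measurable_sum _ (fun p _ => measurable_const.max (measurable_pi_apply p))
  set F : Ω → ℝ := fun ω => S (N ω) ω with hF
  have hFmeas : Measurable F := by
    have hu : Measurable (fun z : Ω × ℕ => S z.2 z.1) :=
      measurable_from_prod_countable_left (fun m => hSmeas m)
    exact hu.comp (measurable_id.prodMk hNmeas)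
  have hFnn : ∀ ω, 0 ≤ F ω := fun ω => hSnn _ ω
  -- key decomposition
  -- single-m identity
  have hSk : ∀ (k : ℕ) (m : ℕ), Integrable (fun ω => (S m ω)^k) μ →
      (∫⁻ ω, Set.indicator {ω' | N ω' = m} (fun ω' => ENNReal.ofReal ((S m ω')^k)) ω ∂μ)
        = μ {ω | N ω = m} * ENNReal.ofReal (∫ ω, (S m ω)^k ∂μ) := by
    intro k m hint
    have hset : MeasurableSet {ω | N ω = m} := hNmeas (measurableSet_singleton m)
    have h1 : ∀ ω, Set.indicator {ω' | N ω' = m} (fun ω' => ENNReal.ofReal ((S m ω')^k)) ω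
        = (Set.indicator ({m} : Set ℕ) (fun _ => (1:ℝ≥0∞)) (N ω))
          * ENNReal.ofReal ((S m ω)^k) := by
      intro ω
      by_cases h : N ω = m
      · simp [Set.indicator_apply, Set.mem_setOf_eq, Set.mem_singleton_iff, h]
      · simp [Set.indicator_apply, Set.mem_setOf_eq, Set.mem_singleton_iff, h]
    simp_rw [h1]
    have hg1 : AEMeasurable (fun ω => Set.indicator ({m} : Set ℕ) (fun _ => (1:ℝ≥0∞)) (N ω)) μ :=
      ((measurable_const.indicator (measurableSet_singleton m)).comp hNmeas).aemeasurable
    have hg2 : AEMeasurable (fun ω => ENNReal.ofReal ((S m ω)^k)) μ :=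
      (((hSmeas m).pow_const k).ennreal_ofReal).aemeasurable
    have hind : IndepFun (fun ω => Set.indicator ({m} : Set ℕ) (fun _ => (1:ℝ≥0∞)) (N ω))
        (fun ω => ENNReal.ofReal ((S m ω)^k)) μ :=
      hNindep.comp (measurable_const.indicator (measurableSet_singleton m))
        (((hφmeas m).pow_const k).ennreal_ofReal)
    rw [lintegral_mul_eq_lintegral_mul_lintegral_of_indepFun'' hg1 hg2 hind]
    congr 1
    · have h2 : (fun ω => Set.indicator ({m} : Set ℕ) (fun _ => (1:ℝ≥0∞)) (N ω))
          = Set.indicator {ω | N ω = m} (fun _ => (1:ℝ≥0∞)) := by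
        funext ω
        by_cases h : N ω = m
        · simp [Set.indicator_apply, Set.mem_setOf_eq, Set.mem_singleton_iff, h]
        · simp [Set.indicator_apply, Set.mem_setOf_eq, Set.mem_singleton_iff, h]
      rw [h2]
      exact lintegral_indicator_one hset
    · exact (ofReal_integral_eq_lintegral_ofReal hint
        (Filter.Eventually.of_forall fun ω => pow_nonneg (hSnn m ω) k)).symm
  -- key decomposition
  have key : ∀ k : ℕ, (∀ m, Integrable (fun ω => (S m ω)^k) μ) →
      ∫⁻ ω, ENNReal.ofReal ((F ω)^k) ∂μ
        = ∑' m, μ {ω | N ω = m} * ENNReal.ofReal (∫ ω, (S m ω)^k ∂μ) := by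
    intro k hint
    have hpt : ∀ ω, ENNReal.ofReal ((F ω)^k)
        = ∑' m, Set.indicator {ω' | N ω' = m} (fun ω' => ENNReal.ofReal ((S m ω')^k)) ω := by
      intro ω
      rw [tsum_eq_single (N ω) ?_]
      · simp [Set.indicator_apply, Set.mem_setOf_eq, hF]
      · intro m hm
        simp [Set.indicator_apply, Set.mem_setOf_eq, Ne.symm hm]
    simp_rw [hpt]
    rw [lintegral_tsum (fun m =>
      ((((hSmeas m).pow_const k).ennreal_ofReal).indicator
        (show MeasurableSet {ω' | N ω' = m} from
          hNmeas (measurableSet_singleton m))).aemeasurable)]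
    exact tsum_congr fun m => hSk k m (hint m)
  -- series values
  have hG1 := geomG1 hq0 hq1
  have hG2 := geomG2 hq0 hq1
  have hqpow : ∀ n : ℕ, (0:ℝ) ≤ q^n * (1-q) := fun n =>
    mul_nonneg (pow_nonneg hq0.le n) (by linarith)
  have hHS1 : HasSum (fun n : ℕ => q^n * (1-q) * ((M:ℝ) * ((n+1:ℕ):ℝ) * a))
      ((M:ℝ)*a/(1-q)) := by
    have h := seriesMain hq0 hq1 hG1 hG2 ((M:ℝ)*a) 0
    have heq : (fun n : ℕ => q^n*(1-q)*((M:ℝ)*a*((n:ℝ)+1) + 0*((n:ℝ)+1)^2))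
        = fun n : ℕ => q^n * (1-q) * ((M:ℝ) * ((n+1:ℕ):ℝ) * a) := by
      funext n; push_cast; ring
    rw [heq] at h
    rwa [show (M:ℝ)*a/(1-q) + 0*(2/(1-q)^2 - 1/(1-q)) = (M:ℝ)*a/(1-q) by ring] at h
  have hHS2 : HasSum (fun n : ℕ => q^n * (1-q) *
        ((M:ℝ) * ((n+1:ℕ):ℝ) * b + (((M:ℝ) * ((n+1:ℕ):ℝ))^2 - (M:ℝ) * ((n+1:ℕ):ℝ)) * a^2))
      ((M:ℝ)*(b-a^2)/(1-q) + (M:ℝ)^2*a^2*(2/(1-q)^2 - 1/(1-q))) := by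
    have h := seriesMain hq0 hq1 hG1 hG2 ((M:ℝ)*(b-a^2)) ((M:ℝ)^2*a^2)
    have heq : (fun n : ℕ => q^n*(1-q)*((M:ℝ)*(b-a^2)*((n:ℝ)+1) + (M:ℝ)^2*a^2*((n:ℝ)+1)^2))
        = fun n : ℕ => q^n * (1-q) *
          ((M:ℝ) * ((n+1:ℕ):ℝ) * b + (((M:ℝ) * ((n+1:ℕ):ℝ))^2 - (M:ℝ) * ((n+1:ℕ):ℝ)) * a^2) := by
      funext n; push_cast; ring
    rw [heq] at h
    exact h
  -- summation over m
  have hsum : ∀ (e : ℕ → ℝ) (V : ℝ), e 0 = 0 → (∀ n, 0 ≤ e (n+1)) →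
      HasSum (fun n : ℕ => q^n * (1-q) * e (n+1)) V →
      ∑' m, μ {ω | N ω = m} * ENNReal.ofReal (e m) = ENNReal.ofReal V := by
    intro e V he0 hnn hHS
    rw [tsum_eq_zero_add' ENNReal.summable]
    have h0 : μ {ω | N ω = 0} * ENNReal.ofReal (e 0) = 0 := by
      rw [he0, ENNReal.ofReal_zero, mul_zero]
    rw [h0, zero_add]
    have hterm : ∀ n : ℕ, μ {ω | N ω = n+1} * ENNReal.ofReal (e (n+1))
        = ENNReal.ofReal (q^n * (1-q) * e (n+1)) := by
      intro n
      rw [hN (n+1) (Nat.le_add_left 1 n)]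
      simp only [Nat.add_sub_cancel]
      rw [← ENNReal.ofReal_mul (hqpow n)]
    simp_rw [hterm]
    rw [← ENNReal.ofReal_tsum_of_nonneg (fun n => mul_nonneg (hqpow n) (hnn n)) hHS.summable,
      hHS.tsum_eq]
  -- nonnegativity of the limit values
  have hexp1 : Real.exp (-γ) ≤ 1 := Real.exp_le_one_iff.mpr (by linarith)
  have hba : 0 ≤ b - a^2 := by
    rw [hb, ha]
    nlinarith [hexp0, hexp1]
  have hbnn : 0 ≤ b := by nlinarith [sq_nonneg a]
  have hqq : (0:ℝ) ≤ 2/(1-q)^2 - 1/(1-q) := by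
    have h : 2/(1-q)^2 - 1/(1-q) = (1+q)/(1-q)^2 := by
      field_simp
      ring
    rw [h]
    exact div_nonneg (by linarith) (sq_nonneg _)
  have hV1nn : (0:ℝ) ≤ (M:ℝ)*a/(1-q) :=
    div_nonneg (mul_nonneg (Nat.cast_nonneg M) hapos.le) (by linarith)
  have hV2nn : (0:ℝ) ≤ (M:ℝ)*(b-a^2)/(1-q) + (M:ℝ)^2*a^2*(2/(1-q)^2 - 1/(1-q)) := by
    have h1 : (0:ℝ) ≤ (M:ℝ)*(b-a^2)/(1-q) :=
      div_nonneg (mul_nonneg (Nat.cast_nonneg M) hba) (by linarith)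
    have h2 : (0:ℝ) ≤ (M:ℝ)^2*a^2*(2/(1-q)^2 - 1/(1-q)) := mul_nonneg (by positivity) hqq
    linarith
  -- first moment
  have hInt1 : ∫ ω, F ω ∂μ = (M:ℝ)*a/(1-q) := by
    rw [integral_eq_lintegral_of_nonneg_ae (Filter.Eventually.of_forall hFnn)
      hFmeas.aestronglyMeasurable]
    have hk := key 1 (fun m => by simpa [pow_one] using hSint m)
    simp only [pow_one] at hk
    rw [hk]
    have := hsum (fun m => (M:ℝ) * (m:ℝ) * a) ((M:ℝ)*a/(1-q)) (by simp)
      (fun n => by positivity) hHS1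
    simp_rw [hSval]
    rw [this, ENNReal.toReal_ofReal hV1nn]
  -- second moment
  have hInt2 : ∫ ω, (F ω)^2 ∂μ
      = (M:ℝ)*(b-a^2)/(1-q) + (M:ℝ)^2*a^2*(2/(1-q)^2 - 1/(1-q)) := by
    rw [integral_eq_lintegral_of_nonneg_ae
      (Filter.Eventually.of_forall fun ω => pow_nonneg (hFnn ω) 2)
      (hFmeas.pow_const 2).aestronglyMeasurable]
    rw [key 2 hS2int]
    have hnn2 : ∀ n : ℕ, (0:ℝ) ≤ (M:ℝ) * ((n+1:ℕ):ℝ) * b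
        + (((M:ℝ) * ((n+1:ℕ):ℝ))^2 - (M:ℝ) * ((n+1:ℕ):ℝ)) * a^2 := by
      intro n
      have hm1 : (1:ℝ) ≤ (M:ℝ) * ((n+1:ℕ):ℝ) := by
        have : (1:ℝ) ≤ (M:ℝ) := by exact_mod_cast hM
        have h2 : (1:ℝ) ≤ ((n+1:ℕ):ℝ) := by exact_mod_cast Nat.succ_le_succ (Nat.zero_le n)
        nlinarith
      nlinarith [mul_nonneg (mul_nonneg (le_trans zero_le_one hm1) hbnn) (sq_nonneg a),
        sq_nonneg a, mul_nonneg (le_trans zero_le_one hm1) hbnn]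
    have := hsum (fun m => (M:ℝ) * (m:ℝ) * b + (((M:ℝ) * (m:ℝ))^2 - (M:ℝ) * (m:ℝ)) * a^2)
      ((M:ℝ)*(b-a^2)/(1-q) + (M:ℝ)^2*a^2*(2/(1-q)^2 - 1/(1-q))) (by simp)
      (fun n => by exact_mod_cast hnn2 n) (by exact_mod_cast hHS2)
    simp_rw [hS2val]
    rw [this, ENNReal.toReal_ofReal hV2nn]
  -- identify the statement's integrand with F
  have hFeq : ∀ ω, (∑ r ∈ Finset.range (N ω), ∑ j : Fin M, max γ (τ (j, r) ω)) = F ω := by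
    intro ω
    rw [hF]
    simp only [hS, hXdef, hs]
    rw [Finset.sum_product, Finset.sum_comm]
  have hI1 : ∫ ω, (∑ r ∈ Finset.range (N ω), ∑ j : Fin M, max γ (τ (j, r) ω)) ∂μ
      = ∫ ω, F ω ∂μ := integral_congr_ae (Filter.Eventually.of_forall fun ω => hFeq ω)
  have hI2 : ∫ ω, (∑ r ∈ Finset.range (N ω), ∑ j : Fin M, max γ (τ (j, r) ω))^2 ∂μ
      = ∫ ω, (F ω)^2 ∂μ :=
    integral_congr_ae (Filter.Eventually.of_forall fun ω => congrArg (fun t => t^2) (hFeq ω))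
  rw [hI1, hI2, hInt1, hInt2]
  have hb2 : γ^2/2 + (γ+1)*Real.exp (-γ) = b/2 := by rw [hb]; ring
  rw [hb2]
  have hane : a ≠ 0 := ne_of_gt hapos
  have hMne : (M:ℝ) ≠ 0 := ne_of_gt hMpos
  field_simp
  ring
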